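/- arXiv:2401.06492 — 2 statements merged into one kernel-verified Lean document; each statement's English description precedes it below -/
import Mathlib

section
/- Let E be a real Banach space, m ≥ 1, and let u : ℝ → E be (m+1)-times continuously differentiable. Let τ > 0, set t_j := j·τ, and let n ≥ m. Then for all ℓ₁, ℓ₂ ∈ {0, 1, …, m} one has ‖∂_τ^{m−ℓ₁}(u^{(ℓ₁)})(t_n) − ∂_τ^{m−ℓ₂}(u^{(ℓ₂)})(t_n)‖² ≤ m³ · τ · ∫_{t_{n−m}}^{t_n} ‖u^{(m+1)}(s)‖² ds, where ∂_τ^{k} is applied to the grid sequence j ↦ u^{(ℓ)}(t_j). -/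
/-- Backward difference quotient of a sequence: `∂_τ a j = (a j - a (j-1)) / τ`
(with the `Nat` subtraction convention at `j = 0`). -/
noncomputable def dtau {E : Type*} [AddCommGroup E] [Module ℝ E] (τ : ℝ) (a : ℕ → E) :
    ℕ → E := fun j => τ⁻¹ • (a j - a (j - 1))

open Set intervalIntegral

section Aux

variable {E : Type*} [NormedAddCommGroup E] [NormedSpace ℝ E]

/-- Locality of iterated backward differences. -/
lemma dtau_iterate_congr (τ : ℝ) :
    ∀ (k : ℕ) (a b : ℕ → E) (n : ℕ), k ≤ n → (∀ j, n - k ≤ j → j ≤ n → a j = b j) →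
      (dtau τ)^[k] a n = (dtau τ)^[k] b n := by
  intro k
  induction k with
  | zero => intro a b n _ h; simpa using h n (by omega) le_rfl
  | succ k ih =>
    intro a b n hk h
    rw [Function.iterate_succ_apply, Function.iterate_succ_apply]
    refine ih _ _ n (by omega) ?_
    intro j hj1 hj2
    have h1 : a j = b j := h j (by omega) hj2
    have h2 : a (j - 1) = b (j - 1) := h (j - 1) (by omega) (by omega)
    simp [dtau, h1, h2]

lemma iteratedDeriv_iteratedDeriv (k l : ℕ) (f : ℝ → E) :
    iteratedDeriv k (iteratedDeriv l f) = iteratedDeriv (k + l) f := by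
  induction k with
  | zero => simp
  | succ k ih =>
    rw [iteratedDeriv_succ, ih, show k + 1 + l = (k + l) + 1 by ring, iteratedDeriv_succ]

lemma iteratedDeriv_shift_smul (k : ℕ) (v : ℝ → E) (hv : ContDiff ℝ (k : ℕ) v) (c τ : ℝ)
    (s : ℝ) :
    iteratedDeriv k (fun t => c • (v t - v (t - τ))) s
      = c • (iteratedDeriv k v s - iteratedDeriv k v (s - τ)) := by
  have hshift : iteratedDeriv k (fun t => v (t - τ)) = fun t => iteratedDeriv k v (t - τ) := by
    have := iteratedDeriv_comp_add_const k v (-τ)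
    simpa [sub_eq_add_neg] using this
  have hvs : ContDiff ℝ (k : ℕ) (fun t => v (t - τ)) :=
    hv.comp (contDiff_id.sub contDiff_const)
  have hsub : iteratedDeriv k (fun t => v t - v (t - τ)) s
      = iteratedDeriv k v s - iteratedDeriv k v (s - τ) := by
    have := iteratedDerivWithin_sub (Set.mem_univ s) uniqueDiffOn_univ
      (f := v) (g := fun t => v (t - τ)) (n := k) hv.contDiffAt.contDiffWithinAt hvs.contDiffAt.contDiffWithinAt
    rw [iteratedDerivWithin_univ] at this
    rw [show (v - fun t => v (t - τ)) = (fun t => v t - v (t - τ)) from rfl] at this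
    rw [this]
    simp only [iteratedDerivWithin_univ]
    rw [hshift]
  have hsmul : iteratedDeriv k (fun t => c • (v t - v (t - τ))) s
      = c • iteratedDeriv k (fun t => v t - v (t - τ)) s := by
    have := iteratedDerivWithin_const_smul (Set.mem_univ s) uniqueDiffOn_univ
      (f := fun t => v t - v (t - τ)) (n := k) c (hv.sub hvs).contDiffAt.contDiffWithinAt
    rw [iteratedDerivWithin_univ] at this
    rw [show (c • fun t => v t - v (t - τ)) = (fun t => c • (v t - v (t - τ))) from rfl] at this
    rw [this]
    simp only [iteratedDerivWithin_univ]
  rw [hsmul, hsub]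

/-- Mean value bound for iterated backward difference quotients. -/
lemma dtau_iterate_sub_bound {τ : ℝ} (hτ : 0 < τ) :
    ∀ (k : ℕ) (v : ℝ → E), ContDiff ℝ (k : ℕ) v → ∀ (n : ℕ), k ≤ n → ∀ (w : E) (C : ℝ),
      (∀ s ∈ Set.Icc (((n - k : ℕ) : ℝ) * τ) ((n : ℝ) * τ), ‖iteratedDeriv k v s - w‖ ≤ C) →
      ‖(dtau τ)^[k] (fun j : ℕ => v ((j : ℝ) * τ)) n - w‖ ≤ C := by
  intro k
  induction k with
  | zero =>
    intro v hv n hn w C hC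
    simpa using hC ((n : ℝ) * τ) (by simp)
  | succ k ih =>
    intro v hv n hn w C hC
    -- the function g(t) = τ⁻¹ • (v t - v (t - τ))
    set g : ℝ → E := fun t => τ⁻¹ • (v t - v (t - τ)) with hg_def
    have hvk : ContDiff ℝ (k : ℕ) v := hv.of_le (by exact_mod_cast Nat.le_succ k)
    have hg : ContDiff ℝ (k : ℕ) g :=
      (hvk.sub (hvk.comp (contDiff_id.sub contDiff_const))).const_smul τ⁻¹
    -- rewrite the iterate
    have hgrid : (dtau τ)^[k + 1] (fun j : ℕ => v ((j : ℝ) * τ)) n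
        = (dtau τ)^[k] (fun j : ℕ => g ((j : ℝ) * τ)) n := by
      rw [Function.iterate_succ_apply]
      refine dtau_iterate_congr τ k _ _ n (by omega) ?_
      intro j hj1 hj2
      have hj0 : 1 ≤ j := by omega
      have hcast : ((j - 1 : ℕ) : ℝ) = (j : ℝ) - 1 := by
        rw [Nat.cast_sub hj0]; norm_num
      simp only [dtau, hg_def, hcast]
      ring_nf
    rw [hgrid]
    refine ih g hg n (by omega) w C ?_
    -- show the derivative bound for g
    intro s hs
    have hder : iteratedDeriv k g s
        = τ⁻¹ • (iteratedDeriv k v s - iteratedDeriv k v (s - τ)) :=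
      iteratedDeriv_shift_smul k v hvk τ⁻¹ τ s
    -- mean value on h t = iteratedDeriv k v t - t • w
    set a : ℝ := ((n - (k + 1) : ℕ) : ℝ) * τ with ha_def
    set b : ℝ := (n : ℝ) * τ with hb_def
    have hmem_s : s ∈ Set.Icc a b := by
      refine ⟨le_trans ?_ hs.1, hs.2⟩
      have : ((n - (k + 1) : ℕ) : ℝ) ≤ ((n - k : ℕ) : ℝ) := by
        exact_mod_cast Nat.sub_le_sub_left (Nat.le_succ k) n
      exact mul_le_mul_of_nonneg_right this hτ.le
    have hmem_s' : s - τ ∈ Set.Icc a b := by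
      constructor
      · have hcast : ((n - k : ℕ) : ℝ) * τ - τ = a := by
          rw [ha_def]
          have h1 : ((n - (k+1) : ℕ) : ℝ) = ((n - k : ℕ) : ℝ) - 1 := by
            have : (n - k : ℕ) = (n - (k+1)) + 1 := by omega
            rw [this]; push_cast; ring
          rw [h1]; ring
        linarith [hs.1]
      · linarith [hs.2, hτ.le]
    set h : ℝ → E := fun t => iteratedDeriv k v t - t • w with hh_def
    have hdv : Differentiable ℝ (iteratedDeriv k v) :=
      hv.differentiable_iteratedDeriv k (by exact_mod_cast Nat.lt_succ_self k)
    have hh' : ∀ t ∈ Set.Icc a b,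
        HasDerivWithinAt h (iteratedDeriv (k + 1) v t - w) (Set.Icc a b) t := by
      intro t _
      have h1 : HasDerivAt (iteratedDeriv k v) (iteratedDeriv (k + 1) v t) t := by
        rw [iteratedDeriv_succ]
        exact (hdv t).hasDerivAt
      have h2 : HasDerivAt (fun x : ℝ => x • w) w t := by
        simpa using (hasDerivAt_id t).smul_const w
      exact (h1.sub h2).hasDerivWithinAt
    have hbound : ∀ t ∈ Set.Icc a b, ‖iteratedDeriv (k + 1) v t - w‖ ≤ C := fun t ht => hC t ht
    have hmv := (convex_Icc a b).norm_image_sub_le_of_norm_hasDerivWithin_le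
      hh' hbound hmem_s' hmem_s
    -- conclude
    have hdiff : h s - h (s - τ) = iteratedDeriv k v s - iteratedDeriv k v (s - τ) - τ • w := by
      simp only [hh_def]
      rw [sub_smul]
      abel
    rw [hder]
    have : τ⁻¹ • (iteratedDeriv k v s - iteratedDeriv k v (s - τ)) - w
        = τ⁻¹ • (h s - h (s - τ)) := by
      rw [hdiff, smul_sub, smul_sub, smul_smul, inv_mul_cancel₀ hτ.ne', one_smul, smul_sub]
    rw [this, norm_smul]
    have hns : ‖s - (s - τ)‖ = τ := by
      rw [show s - (s - τ) = τ by ring, Real.norm_eq_abs, abs_of_pos hτ]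
    have hmv' : ‖h s - h (s - τ)‖ ≤ C * τ := by rwa [hns] at hmv
    calc ‖τ⁻¹‖ * ‖h s - h (s - τ)‖ ≤ ‖τ⁻¹‖ * (C * τ) :=
          mul_le_mul_of_nonneg_left hmv' (norm_nonneg _)
      _ = C := by
          rw [Real.norm_eq_abs, abs_of_pos (inv_pos.mpr hτ)]
          field_simp

/-- Increment bound by the integral of the norm of the derivative (no completeness needed). -/
lemma norm_sub_le_intervalIntegral_norm {f f' : ℝ → E} (hf : ∀ t, HasDerivAt f (f' t) t)
    (hc : Continuous f') {x y : ℝ} (hxy : x ≤ y) :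
    ‖f y - f x‖ ≤ ∫ σ in x..y, ‖f' σ‖ := by
  have hB : ∀ t, HasDerivAt (fun t => ∫ σ in x..t, ‖f' σ‖) ‖f' t‖ t := fun t =>
    ((continuous_norm.comp hc).integral_hasStrictDerivAt x t).hasDerivAt
  have hfc : Continuous f := by
    have : Differentiable ℝ f := fun t => (hf t).differentiableAt
    exact this.continuous
  have hcont : ContinuousOn (fun t => f t - f x) (Set.Icc x y) :=
    (hfc.sub continuous_const).continuousOn
  have hder : ∀ t ∈ Set.Ico x y,
      HasDerivWithinAt (fun t => f t - f x) (f' t) (Set.Ici t) t := fun t _ =>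
    (((hf t).sub_const (f x))).hasDerivWithinAt
  have h0 : ‖f x - f x‖ ≤ ∫ σ in x..x, ‖f' σ‖ := by simp
  have := image_norm_le_of_norm_deriv_right_le_deriv_boundary hcont hder h0 hB
    (fun t _ => le_rfl) (Set.right_mem_Icc.mpr hxy)
  simpa using this

lemma oscillation_le {f f' : ℝ → E} (hf : ∀ t, HasDerivAt f (f' t) t)
    (hc : Continuous f') {a b x y : ℝ} (hab : a ≤ b) (hx : x ∈ Set.Icc a b)
    (hy : y ∈ Set.Icc a b) :
    ‖f y - f x‖ ≤ ∫ σ in a..b, ‖f' σ‖ := by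
  have hint : ∀ {p q : ℝ}, p ∈ Set.Icc a b → q ∈ Set.Icc a b → p ≤ q →
      (∫ σ in p..q, ‖f' σ‖) ≤ ∫ σ in a..b, ‖f' σ‖ := by
    intro p q hp hq hpq
    exact intervalIntegral.integral_mono_interval hp.1 hpq hq.2
      (Filter.Eventually.of_forall fun σ => norm_nonneg _)
      (hc.norm.intervalIntegrable _ _)
  rcases le_total x y with h | h
  · exact le_trans (norm_sub_le_intervalIntegral_norm hf hc h) (hint hx hy h)
  · rw [norm_sub_rev]
    exact le_trans (norm_sub_le_intervalIntegral_norm hf hc h) (hint hy hx h)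

/-- Cauchy–Schwarz for interval integrals of continuous functions. -/
lemma sq_intervalIntegral_le {φ : ℝ → ℝ} (hφ : Continuous φ) {a b : ℝ} (hab : a ≤ b) :
    (∫ x in a..b, φ x) ^ 2 ≤ (b - a) * ∫ x in a..b, (φ x) ^ 2 := by
  rcases eq_or_lt_of_le hab with rfl | hlt
  · simp
  set L : ℝ := b - a with hL_def
  have hL : 0 < L := by simp [hL_def]; linarith
  set A1 : ℝ := ∫ x in a..b, φ x with hA1
  set A2 : ℝ := ∫ x in a..b, (φ x) ^ 2 with hA2
  set t : ℝ := A1 / L with ht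
  have h0 : (0 : ℝ) ≤ ∫ x in a..b, (φ x - t) ^ 2 :=
    intervalIntegral.integral_nonneg hab fun x _ => sq_nonneg _
  have hexp : ∫ x in a..b, (φ x - t) ^ 2 = A2 - 2 * t * A1 + t ^ 2 * L := by
    have hi1 : IntervalIntegrable (fun x => (φ x) ^ 2) MeasureTheory.volume a b :=
      (hφ.pow 2).intervalIntegrable a b
    have hi2 : IntervalIntegrable (fun x => 2 * t * φ x) MeasureTheory.volume a b :=
      (continuous_const.mul hφ).intervalIntegrable a b
    have hi3 : IntervalIntegrable (fun x => (t : ℝ) ^ 2) MeasureTheory.volume a b :=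
      intervalIntegrable_const
    have : (fun x => (φ x - t) ^ 2) = fun x => (φ x) ^ 2 - 2 * t * φ x + t ^ 2 := by
      funext x; ring
    rw [this, intervalIntegral.integral_add (hi1.sub hi2) hi3,
      intervalIntegral.integral_sub hi1 hi2, intervalIntegral.integral_const,
      intervalIntegral.integral_const_mul]
    simp only [smul_eq_mul, ← hA1, ← hA2]
    ring
  rw [hexp] at h0
  have e1 : 2 * t * A1 = 2 * (A1 ^ 2 / L) := by rw [ht]; ring
  have e2 : t ^ 2 * L = A1 ^ 2 / L := by rw [ht]; field_simp
  rw [e1, e2] at h0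
  have : A1 ^ 2 / L ≤ A2 := by linarith
  calc A1 ^ 2 = A1 ^ 2 / L * L := by field_simp
    _ ≤ A2 * L := mul_le_mul_of_nonneg_right this hL.le
    _ = L * A2 := mul_comm _ _

lemma contDiff_iteratedDeriv_of_le (k ℓ : ℕ) (f : ℝ → E) (hf : ContDiff ℝ ((k + ℓ : ℕ)) f) :
    ContDiff ℝ (k : ℕ) (iteratedDeriv ℓ f) := by
  rw [contDiff_nat_iff_iteratedDeriv]
  constructor
  · intro p hp
    rw [iteratedDeriv_iteratedDeriv]
    exact hf.continuous_iteratedDeriv (p + ℓ) (by exact_mod_cast Nat.add_le_add_right hp ℓ)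
  · intro p hp
    rw [iteratedDeriv_iteratedDeriv]
    exact hf.differentiable_iteratedDeriv (p + ℓ)
      (by exact_mod_cast Nat.add_lt_add_right hp ℓ)

end Aux

/-- Second estimate of Lemma 4.2 of the paper, with the explicit constant `m³` from its
proof: for a `C^{m+1}` function `u`, mixed discrete/continuous derivatives of total
order `m` differ in square norm by at most `m³ τ ∫_{t_{n-m}}^{t_n} ‖u^{(m+1)}‖²`. -/
theorem discrete_derivative_defect_sq_estimate
    {E : Type*} [NormedAddCommGroup E] [NormedSpace ℝ E]
    (m : ℕ) (hm : 1 ≤ m) (u : ℝ → E) (hu : ContDiff ℝ (m + 1 : ℕ) u)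
    (τ : ℝ) (hτ : 0 < τ) (n : ℕ) (hn : m ≤ n)
    (ℓ₁ ℓ₂ : ℕ) (hℓ₁ : ℓ₁ ≤ m) (hℓ₂ : ℓ₂ ≤ m) :
    ‖(dtau τ)^[m - ℓ₁] (fun j : ℕ => iteratedDeriv ℓ₁ u ((j : ℝ) * τ)) n -
        (dtau τ)^[m - ℓ₂] (fun j : ℕ => iteratedDeriv ℓ₂ u ((j : ℝ) * τ)) n‖ ^ 2 ≤
      (m : ℝ) ^ 3 * τ *
        ∫ s in (((n - m : ℕ) : ℝ) * τ)..((n : ℝ) * τ),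
          ‖iteratedDeriv (m + 1) u s‖ ^ 2 := by
  set a : ℝ := ((n - m : ℕ) : ℝ) * τ with ha_def
  set b : ℝ := (n : ℝ) * τ with hb_def
  have hab : a ≤ b :=
    mul_le_mul_of_nonneg_right (Nat.cast_le.mpr (Nat.sub_le n m)) hτ.le
  set P : ℝ → E := iteratedDeriv m u with hP_def
  set Q : ℝ → E := iteratedDeriv (m + 1) u with hQ_def
  have hQc : Continuous Q := hu.continuous_iteratedDeriv (m + 1) le_rfl
  have hP' : ∀ t, HasDerivAt P (Q t) t := by
    intro t
    have hd : Differentiable ℝ P :=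
      hu.differentiable_iteratedDeriv m (by exact_mod_cast Nat.lt_succ_self m)
    have : Q = deriv P := by rw [hQ_def, hP_def, iteratedDeriv_succ]
    rw [this]
    exact (hd t).hasDerivAt
  set J : ℝ := ∫ σ in a..b, ‖Q σ‖ with hJ_def
  have hosc : ∀ x ∈ Set.Icc a b, ∀ y ∈ Set.Icc a b, ‖P y - P x‖ ≤ J := fun x hx y hy =>
    oscillation_le hP' hQc hab hx hy
  -- the key estimate applied to each mixed derivative
  have key : ∀ ℓ : ℕ, ℓ ≤ m → ∀ (w : E) (C : ℝ), (∀ s ∈ Set.Icc a b, ‖P s - w‖ ≤ C) →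
      ‖(dtau τ)^[m - ℓ] (fun j : ℕ => iteratedDeriv ℓ u ((j : ℝ) * τ)) n - w‖ ≤ C := by
    intro ℓ hℓ w C hC
    have hv : ContDiff ℝ ((m - ℓ : ℕ) : ℕ) (iteratedDeriv ℓ u) := by
      apply contDiff_iteratedDeriv_of_le
      exact hu.of_le (Nat.cast_le.mpr (by omega))
    refine dtau_iterate_sub_bound hτ (m - ℓ) _ hv n (le_trans (Nat.sub_le m ℓ) hn) w C ?_
    intro s hs
    have hPs : iteratedDeriv (m - ℓ) (iteratedDeriv ℓ u) s = P s := by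
      rw [iteratedDeriv_iteratedDeriv, hP_def, Nat.sub_add_cancel hℓ]
    rw [hPs]
    apply hC
    refine ⟨le_trans ?_ hs.1, hs.2⟩
    rw [ha_def]
    exact mul_le_mul_of_nonneg_right
      (Nat.cast_le.mpr (Nat.sub_le_sub_left (Nat.sub_le m ℓ) n)) hτ.le
  set D₁ : E := (dtau τ)^[m - ℓ₁] (fun j : ℕ => iteratedDeriv ℓ₁ u ((j : ℝ) * τ)) n with hD₁
  set D₂ : E := (dtau τ)^[m - ℓ₂] (fun j : ℕ => iteratedDeriv ℓ₂ u ((j : ℝ) * τ)) n with hD₂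
  have h1 : ∀ s ∈ Set.Icc a b, ‖P s - D₂‖ ≤ J := by
    intro s hs
    rw [norm_sub_rev]
    exact key ℓ₂ hℓ₂ (P s) J (fun σ hσ => hosc s hs σ hσ)
  have h2 : ‖D₁ - D₂‖ ≤ J := key ℓ₁ hℓ₁ D₂ J h1
  have hJ0 : (0 : ℝ) ≤ J :=
    intervalIntegral.integral_nonneg hab fun σ _ => norm_nonneg _
  have hsq : ‖D₁ - D₂‖ ^ 2 ≤ J ^ 2 := by
    nlinarith [norm_nonneg (D₁ - D₂)]
  have hCS : J ^ 2 ≤ (b - a) * ∫ σ in a..b, ‖Q σ‖ ^ 2 := by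
    rw [hJ_def]
    exact sq_intervalIntegral_le hQc.norm hab
  have hba : b - a = (m : ℝ) * τ := by
    rw [hb_def, ha_def, Nat.cast_sub hn]; ring
  have hA0 : (0 : ℝ) ≤ ∫ σ in a..b, ‖Q σ‖ ^ 2 :=
    intervalIntegral.integral_nonneg hab fun σ _ => sq_nonneg _
  have hm1 : (1 : ℝ) ≤ (m : ℝ) := by exact_mod_cast hm
  calc ‖D₁ - D₂‖ ^ 2 ≤ J ^ 2 := hsq
    _ ≤ (b - a) * ∫ σ in a..b, ‖Q σ‖ ^ 2 := hCS
    _ = (m : ℝ) * τ * ∫ σ in a..b, ‖Q σ‖ ^ 2 := by rw [hba]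
    _ ≤ (m : ℝ) ^ 3 * τ * ∫ σ in a..b, ‖Q σ‖ ^ 2 := by
        apply mul_le_mul_of_nonneg_right _ hA0
        apply mul_le_mul_of_nonneg_right _ hτ.le
        have h2' : (1 : ℝ) ≤ (m : ℝ) ^ 2 := by nlinarith
        nlinarith
end

section
/- Let ℓ ≥ 1 and let g : ℝ → [0, ∞) be a measurable function that is integrable on [0, ℓ]. Then ∫_{[0,1]^{ℓ}} g(σ₁ + ⋯ + σ_ℓ) d(σ₁, …, σ_ℓ) ≤ ∫_0^{ℓ} g(s) ds, where the left-hand integral is with respect to ℓ-dimensional Lebesgue measure on the unit cube. -/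
open MeasureTheory

private lemma inner_shift_le (g : ℝ → ℝ) (hg : Measurable g) {L c : ℝ} (hc : 0 ≤ c)
    (hcL : c + 1 ≤ L) :
    ∫⁻ t in Set.Icc (0:ℝ) 1, ENNReal.ofReal (g (t + c)) ≤
      ∫⁻ s in Set.Icc (0:ℝ) L, ENNReal.ofReal (g s) := by
  set H : ℝ → ENNReal := (Set.Icc (0:ℝ) L).indicator (fun s => ENNReal.ofReal (g s)) with hH
  have hHmeas : Measurable H := (ENNReal.measurable_ofReal.comp hg).indicator measurableSet_Icc
  calc ∫⁻ t in Set.Icc (0:ℝ) 1, ENNReal.ofReal (g (t + c))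
      = ∫⁻ t in Set.Icc (0:ℝ) 1, H (t + c) := by
        refine setLIntegral_congr_fun measurableSet_Icc (fun t ht => ?_)
        rw [hH, Set.indicator_of_mem]
        exact ⟨by linarith [ht.1], by linarith [ht.2]⟩
    _ ≤ ∫⁻ t, H (t + c) := setLIntegral_le_lintegral _ _
    _ = ∫⁻ s, H s := lintegral_add_right_eq_self H c
    _ = ∫⁻ s in Set.Icc (0:ℝ) L, ENNReal.ofReal (g s) := lintegral_indicator measurableSet_Icc _

private lemma cube_lintegral_le (n : ℕ) (g : ℝ → ℝ) (hg : Measurable g) :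
    ∫⁻ σ in Set.Icc (0 : Fin (n+1) → ℝ) (fun _ => 1), ENNReal.ofReal (g (∑ i, σ i)) ≤
      ∫⁻ s in Set.Icc (0:ℝ) ((n:ℝ)+1), ENNReal.ofReal (g s) := by
  set T := MeasurableEquiv.piFinSuccAbove (fun _ : Fin (n+1) => ℝ) 0 with hT
  have hTmp : MeasurePreserving T volume volume := by
    rw [Measure.volume_eq_prod, MeasureTheory.volume_pi, MeasureTheory.volume_pi]
    exact measurePreserving_piFinSuccAbove (fun _ => volume) 0
  set s1 : Set ℝ := Set.Icc 0 1 with hs1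
  set sn : Set (Fin n → ℝ) := Set.Icc 0 (fun _ => 1) with hsn
  have hTapp : ∀ σ : Fin (n+1) → ℝ, T σ = (σ 0, fun j => σ j.succ) := by
    intro σ
    simp only [hT, MeasurableEquiv.piFinSuccAbove, MeasurableEquiv.coe_mk,
      Fin.insertNthEquiv_symm_apply, Fin.removeNth, Fin.zero_succAbove]
    rfl
  have hpre : Set.Icc (0 : Fin (n+1) → ℝ) (fun _ => 1) = T ⁻¹' (s1 ×ˢ sn) := by
    ext σ
    simp only [Set.mem_Icc, Set.mem_preimage, hTapp, Set.mem_prod, hs1, hsn, Pi.le_def,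
      Fin.forall_fin_succ]
    constructor
    · rintro ⟨⟨h0, hs⟩, h1, ht⟩
      exact ⟨⟨h0, h1⟩, fun j => hs j, fun j => ht j⟩
    · rintro ⟨⟨h0, h1⟩, hs, ht⟩
      exact ⟨⟨h0, fun j => hs j⟩, h1, fun j => ht j⟩
  have hf' : Measurable (fun p : ℝ × (Fin n → ℝ) => ENNReal.ofReal (g (p.1 + ∑ j, p.2 j))) := by
    apply ENNReal.measurable_ofReal.comp
    exact hg.comp (measurable_fst.add (Finset.measurable_sum _ fun j _ => (measurable_pi_apply j).comp measurable_snd))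
  have hsum : ∀ σ : Fin (n+1) → ℝ, (∑ i, σ i) = σ 0 + ∑ j : Fin n, σ j.succ := fun σ =>
    Fin.sum_univ_succ σ
  calc ∫⁻ σ in Set.Icc (0 : Fin (n+1) → ℝ) (fun _ => 1), ENNReal.ofReal (g (∑ i, σ i))
      = ∫⁻ σ in T ⁻¹' (s1 ×ˢ sn),
          (fun p : ℝ × (Fin n → ℝ) => ENNReal.ofReal (g (p.1 + ∑ j, p.2 j))) (T σ) := by
        rw [← hpre]
        refine setLIntegral_congr_fun measurableSet_Icc (fun σ _ => ?_)
        rw [hTapp, hsum]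
    _ = ∫⁻ p in s1 ×ˢ sn, ENNReal.ofReal (g (p.1 + ∑ j, p.2 j)) :=
        hTmp.setLIntegral_comp_preimage (measurableSet_Icc.prod measurableSet_Icc) hf'
    _ = ∫⁻ t in s1, ∫⁻ y in sn, ENNReal.ofReal (g (t + ∑ j, y j)) := by
        rw [Measure.volume_eq_prod, ← Measure.prod_restrict]
        exact lintegral_prod _ hf'.aemeasurable
    _ = ∫⁻ y in sn, ∫⁻ t in s1, ENNReal.ofReal (g (t + ∑ j, y j)) :=
        lintegral_lintegral_swap hf'.aemeasurable
    _ ≤ ∫⁻ _ in sn, ∫⁻ s in Set.Icc (0:ℝ) ((n:ℝ)+1), ENNReal.ofReal (g s) := by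
        refine setLIntegral_mono' measurableSet_Icc fun y hy => ?_
        have hy0 : 0 ≤ ∑ j, y j := Finset.sum_nonneg fun j _ => hy.1 j
        have hyn : ∑ j, y j ≤ n := by
          calc ∑ j, y j ≤ ∑ _j : Fin n, (1:ℝ) := Finset.sum_le_sum fun j _ => hy.2 j
            _ = n := by simp
        exact inner_shift_le g hg hy0 (by linarith)
    _ ≤ ∫⁻ s in Set.Icc (0:ℝ) ((n:ℝ)+1), ENNReal.ofReal (g s) := by
        rw [lintegral_const, Measure.restrict_apply_univ, hsn, Real.volume_Icc_pi]
        simp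

/-- The iterated-integral estimate from the appendix of the paper: for a nonnegative
measurable `g`, the integral of `g(σ₁ + ⋯ + σ_ℓ)` over the unit cube `[0,1]^ℓ` is
bounded by `∫_0^ℓ g(s) ds`. -/
theorem cube_integral_of_sum_le
    (ℓ : ℕ) (hℓ : 1 ≤ ℓ) (g : ℝ → ℝ) (hg : Measurable g) (hg0 : ∀ x, 0 ≤ g x)
    (hgi : IntegrableOn g (Set.Icc 0 (ℓ : ℝ))) :
    ∫ σ in Set.Icc (0 : Fin ℓ → ℝ) (fun _ => 1), g (∑ i, σ i) ≤
      ∫ s in (0 : ℝ)..(ℓ : ℝ), g s := by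
  obtain ⟨n, rfl⟩ : ∃ n, ℓ = n + 1 := ⟨ℓ - 1, (Nat.succ_pred_eq_of_pos hℓ).symm⟩
  have hcast : ((n + 1 : ℕ) : ℝ) = (n : ℝ) + 1 := by push_cast; ring
  have hsum_meas : Measurable fun σ : Fin (n+1) → ℝ => g (∑ i, σ i) :=
    hg.comp (Finset.measurable_sum _ fun i _ => measurable_pi_apply i)
  have hlin : ∫⁻ σ in Set.Icc (0 : Fin (n+1) → ℝ) (fun _ => 1),
      ENNReal.ofReal (g (∑ i, σ i)) ≤ ∫⁻ s in Set.Icc (0:ℝ) ((n:ℝ)+1), ENNReal.ofReal (g s) :=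
    cube_lintegral_le n g hg
  have hRHS : (∫ s in (0:ℝ)..((n+1:ℕ):ℝ), g s) =
      (∫⁻ s in Set.Icc (0:ℝ) ((n:ℝ)+1), ENNReal.ofReal (g s)).toReal := by
    rw [intervalIntegral.integral_of_le (by positivity), ← integral_Icc_eq_integral_Ioc, hcast]
    exact integral_eq_lintegral_of_nonneg_ae (.of_forall hg0) hg.aestronglyMeasurable.restrict
  have hLHS : (∫ σ in Set.Icc (0 : Fin (n+1) → ℝ) (fun _ => 1), g (∑ i, σ i)) =
      (∫⁻ σ in Set.Icc (0 : Fin (n+1) → ℝ) (fun _ => 1),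
        ENNReal.ofReal (g (∑ i, σ i))).toReal :=
    integral_eq_lintegral_of_nonneg_ae (.of_forall fun σ => hg0 _)
      hsum_meas.aestronglyMeasurable.restrict
  have hfin : (∫⁻ s in Set.Icc (0:ℝ) ((n:ℝ)+1), ENNReal.ofReal (g s)) ≠ ⊤ := by
    have := hgi.lintegral_lt_top
    rw [hcast] at this
    exact this.ne
  rw [hLHS, hRHS]
  exact ENNReal.toReal_mono hfin hlin
end
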